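/- In the free group F_2 = ⟨α, β⟩, for every m ≥ 2 the element α^2 β^m α β^m is not primitive. -/
import Mathlib

universe u

/-- `w` is a *primitive* element of the subgroup `H`: it is a member of some free basis of `H`. -/
def IsPrimitiveIn {F : Type u} [Group F] (H : Subgroup F) (w : F) : Prop :=
  ∃ (S : Type u) (b : FreeGroupBasis S H) (i : S), (b i : F) = w

/-- `w` is a primitive element of the group `F`: it is a member of some free basis of `F`. -/
def IsPrimitive {F : Type u} [Group F] (w : F) : Prop :=
  ∃ (S : Type u) (b : FreeGroupBasis S F) (i : S), b i = w

/-- The imprimitivity rank of `w`: the minimal rank of a finitely generated subgroup of `F`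
containing `w` in which `w` is not primitive, or `∞` if no such subgroup exists. -/
noncomputable def irank {F : Type u} [Group F] (w : F) : ℕ∞ :=
  sInf {n : ℕ∞ | ∃ m : ℕ, n = (m : ℕ∞) ∧ ∃ H : Subgroup F,
    Nonempty (FreeGroupBasis (Fin m) H) ∧ w ∈ H ∧ ¬ IsPrimitiveIn H w}

/-- Rank invariance in the special case: a type indexing a free-group basis of `F₂` has
exactly two elements. -/
lemma aux_equiv_fin_two {S : Type*} (e : FreeGroup (Fin 2) ≃* FreeGroup S) :
    Nonempty (S ≃ Fin 2) := by
  classical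
  set M := Multiplicative (ZMod 2) with hM
  have hequiv : (FreeGroup S →* M) ≃ (FreeGroup (Fin 2) →* M) :=
    { toFun := fun f => f.comp e.toMonoidHom
      invFun := fun g => g.comp e.symm.toMonoidHom
      left_inv := fun f => by ext x; simp
      right_inv := fun g => by ext x; simp }
  have E : (S → M) ≃ (Fin 2 → M) :=
    FreeGroup.lift.trans (hequiv.trans FreeGroup.lift.symm)
  haveI : Finite (S → M) := Finite.of_equiv _ E.symm
  haveI : Finite S := by
    apply Finite.of_injective
      (fun s : S => (fun t => if t = s then Multiplicative.ofAdd (1 : ZMod 2) else 1 : S → M))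
    intro s₁ s₂ h
    by_contra hne
    have h1 := congrFun h s₁
    simp only [if_pos rfl, if_neg hne] at h1
    exact absurd h1 (by decide)
  haveI := Fintype.ofFinite S
  have hc : Fintype.card S = 2 := by
    have h1 : Fintype.card (S → M) = Fintype.card (Fin 2 → M) := Fintype.card_congr E
    have h2 : Fintype.card (Fin 2 → M) = 4 := by simp [hM]
    have h3 : Fintype.card M = 2 := by simp [hM]
    rw [Fintype.card_fun, h2, h3] at h1
    have : (2 : ℕ) ^ Fintype.card S = 2 ^ 2 := by omega
    exact Nat.pow_right_injective (by norm_num) this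
  exact ⟨Fintype.equivFinOfCardEq hc⟩

/-- If some homomorphism from `F₂` kills `w` but has non-commuting images of the generators,
then `w` is not primitive. -/
lemma not_primitive_of_hom {G : Type} [Group G] (φ : FreeGroup (Fin 2) →* G)
    (w : FreeGroup (Fin 2)) (hw : φ w = 1)
    (hab : φ (FreeGroup.of 0) * φ (FreeGroup.of 1) ≠ φ (FreeGroup.of 1) * φ (FreeGroup.of 0)) :
    ¬ IsPrimitive w := by
  rintro ⟨S, bas, i, hbi⟩
  obtain ⟨ε⟩ := aux_equiv_fin_two bas.repr
  set j : S := ε.symm (if ε i = 0 then 1 else 0) with hj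
  have hcov : ∀ s : S, s ≠ i → s = j := by
    intro s hs
    apply ε.injective
    have hne : ε s ≠ ε i := fun h => hs (ε.injective h)
    rw [show ε j = if ε i = 0 then 1 else 0 from by rw [hj]; simp]
    revert hne; generalize ε s = u; generalize ε i = v
    revert u v; decide
  set χ : FreeGroup S →* G := φ.comp bas.repr.symm.toMonoidHom with hχdef
  have hχ : ∀ x, χ (bas.repr x) = φ x := fun x => by simp [hχdef]
  have hχi : χ (FreeGroup.of i) = 1 := by
    show φ (bas.repr.symm (FreeGroup.of i)) = 1
    show φ (bas i) = 1
    rw [hbi]; exact hw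
  set g : G := χ (FreeGroup.of j) with hg
  have key : ∀ x : FreeGroup S, ∃ n : ℤ, χ x = g ^ n := by
    intro x
    refine FreeGroup.induction_on x ⟨0, by simp⟩ (fun s => ?_) (fun s ⟨n, hn⟩ => ?_)
      (fun x y ⟨n, hn⟩ ⟨k, hk⟩ => ?_)
    · by_cases h : s = i
      · refine ⟨0, ?_⟩
        show χ (FreeGroup.of s) = g ^ 0
        rw [h, hχi, zpow_zero]
      · refine ⟨1, ?_⟩
        show χ (FreeGroup.of s) = g ^ 1
        rw [hcov s h, zpow_one, hg]
    · exact ⟨-n, by rw [map_inv, hn, zpow_neg]⟩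
    · exact ⟨n + k, by rw [map_mul, hn, hk, zpow_add]⟩
  obtain ⟨n, hn⟩ := key (bas.repr (FreeGroup.of 0))
  obtain ⟨k, hk⟩ := key (bas.repr (FreeGroup.of 1))
  rw [hχ] at hn
  rw [hχ] at hk
  exact hab (by rw [hn, hk, ← zpow_add, ← zpow_add, add_comm])

/-- In the free group `F₂ = ⟨α, β⟩`, for every `m ≥ 2` the element `α² β^m α β^m` is not
primitive. -/
theorem not_primitive_a2_bm_a_bm (m : ℕ) (hm : 2 ≤ m) :
    ¬ IsPrimitive ((FreeGroup.of 0 : FreeGroup (Fin 2)) ^ 2 * (FreeGroup.of 1) ^ m *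
        FreeGroup.of 0 * (FreeGroup.of 1) ^ m) := by
  classical
  haveI : Fact (1 < m) := ⟨hm⟩
  set f : Polynomial (ZMod m) := Polynomial.X^2 + Polynomial.X + 1 with hf
  have hmonic : f.Monic := by rw [hf]; monicity!
  have hdeg : f.natDegree = 2 := by rw [hf]; compute_degree!
  set R := AdjoinRoot f with hR
  set r : R := AdjoinRoot.root _ with hr
  have h0 : r^2 + r + 1 = 0 := by
    have := AdjoinRoot.eval₂_root f
    rw [hf] at this
    simpa using this
  have h3 : r^3 = 1 := by linear_combination (r - 1) * h0
  have hm0 : (m : R) = 0 := by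
    rw [← map_natCast (algebraMap (ZMod m) R) m, ZMod.natCast_self, map_zero]
  have hr1 : r ≠ 1 := by
    have hne := AdjoinRoot.mk_ne_zero_of_natDegree_lt hmonic
      (show (Polynomial.X - Polynomial.C 1 : Polynomial (ZMod m)) ≠ 0 from
        Polynomial.X_sub_C_ne_zero 1)
      (by rw [Polynomial.natDegree_X_sub_C, hdeg]; omega)
    rw [map_sub, AdjoinRoot.mk_X, AdjoinRoot.mk_C] at hne
    intro h
    rw [← hr] at hne
    exact hne (by rw [h, map_one, sub_self])
  -- the permutation `z ↦ r * z`
  set a : Equiv.Perm R :=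
    { toFun := fun z => r * z
      invFun := fun z => r ^ 2 * z
      left_inv := fun z => by linear_combination z * h3
      right_inv := fun z => by linear_combination z * h3 } with ha
  have ha_apply : ∀ z : R, a z = r * z := fun z => by rw [ha]; rfl
  -- the permutation `z ↦ z + 1`
  set b : Equiv.Perm R := Equiv.addRight (1 : R) with hb
  have hb_apply : ∀ z : R, b z = z + 1 := fun z => rfl
  have hbpow : ∀ (n : ℕ) (z : R), (b ^ n) z = z + n := by
    intro n
    induction n with
    | zero => intro z; simp
    | succ k ih =>
        intro z
        rw [pow_succ']
        rw [Equiv.Perm.mul_apply, hb_apply, ih]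
        push_cast; ring
  have hbm : b ^ m = 1 := by
    apply Equiv.ext
    intro z
    rw [hbpow, hm0]
    simp
  have ha3 : a ^ 3 = 1 := by
    apply Equiv.ext
    intro z
    show (a^3) z = z
    rw [pow_succ, pow_succ, pow_one, Equiv.Perm.mul_apply, Equiv.Perm.mul_apply,
      ha_apply, ha_apply, ha_apply]
    linear_combination z * h3
  have hab : a * b ≠ b * a := by
    intro h
    have h1 := DFunLike.congr_fun h (0 : R)
    rw [Equiv.Perm.mul_apply, Equiv.Perm.mul_apply, hb_apply, ha_apply, ha_apply, hb_apply] at h1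
    exact hr1 (by linear_combination h1)
  set φ : FreeGroup (Fin 2) →* Equiv.Perm R :=
    FreeGroup.lift (fun t : Fin 2 => if t = 0 then a else b) with hφ
  have hφ0 : φ (FreeGroup.of 0) = a := by rw [hφ, FreeGroup.lift_apply_of]; simp
  have hφ1 : φ (FreeGroup.of 1) = b := by rw [hφ, FreeGroup.lift_apply_of]; simp
  apply not_primitive_of_hom φ
  · simp only [map_mul, map_pow, hφ0, hφ1, hbm, mul_one]
    rw [← pow_succ]
    exact ha3
  · rw [hφ0, hφ1]
    exact hab
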